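/- Let c = tan(19π/40). Then 1/2 + arctan(−c − 100)/π > (1/20)·(1/2 + arctan(c − 100)/π). Equivalently, for the Cauchy location family F_θ(x) = 1/2 + arctan(x − θ)/π with α = 0.05, c = F_0^{-1}(1 − α/2) and θ_1 = 100, one has F_{θ_1}(−c) > α·F_{θ_1}(c), so that α + F_{θ_1}(−c) − α·F_{θ_1}(c) > α. -/

import Mathlib

open Real

lemma arctan_lt_self_of_pos {t : ℝ} (ht : 0 < t) : arctan t < t := by
  have h1 : 0 < arctan t := by
    have := arctan_strictMono ht
    rwa [arctan_zero] at this
  have h2 : arctan t < π / 2 := arctan_lt_pi_div_two t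
  have := lt_tan h1 h2
  rwa [tan_arctan] at this

/-- Cauchy counterexample. With c = tan(19π/40) (the 1 − α/2 quantile of
the standard Cauchy distribution for α = 0.05 = 1/20) and θ₁ = 100, one has
F_{θ₁}(−c) > α·F_{θ₁}(c), where F_θ(x) = 1/2 + arctan(x − θ)/π; consequently
α + F_{θ₁}(−c) − α·F_{θ₁}(c) > α. -/
theorem cauchy_counterexample :
    (1 / 20 : ℝ) * (1 / 2 + arctan (tan (19 * π / 40) - 100) / π)
      < 1 / 2 + arctan (-(tan (19 * π / 40)) - 100) / π ∧
    (1 / 20 : ℝ)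
      < 1 / 20 + (1 / 2 + arctan (-(tan (19 * π / 40)) - 100) / π)
          - (1 / 20) * (1 / 2 + arctan (tan (19 * π / 40) - 100) / π) := by
  have hpi : (3.141592 : ℝ) < π := pi_gt_d6
  have hpilt : π < 3.1416 := pi_lt_d6.trans (by norm_num)
  have hpi0 : (0 : ℝ) < π := by linarith
  -- c = tan(19π/40) = (tan(π/40))⁻¹
  have hkey : 19 * π / 40 = π / 2 - π / 40 := by ring
  set c : ℝ := tan (19 * π / 40) with hc
  have hcinv : c = (tan (π / 40))⁻¹ := by rw [hc, hkey, tan_pi_div_two_sub]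
  have htpos : (0 : ℝ) < tan (π / 40) := by
    have := lt_tan (x := π / 40) (by positivity) (by linarith)
    linarith
  have hc0 : 0 < c := by rw [hcinv]; positivity
  -- c < 13
  have ht13 : (1 : ℝ) / 13 < tan (π / 40) := by
    have := lt_tan (x := π / 40) (by positivity) (by linarith)
    have : 3.141592 / 40 < tan (π / 40) := by linarith
    linarith
  have hc13 : c < 13 := by
    rw [hcinv]
    rw [inv_lt_comm₀ htpos (by norm_num)]
    linarith
  -- rewrite F(a) and F(b) via arctan of inverse
  have ha : (c - 100 : ℝ) < 0 := by linarith
  have hb : (-c - 100 : ℝ) < 0 := by linarith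
  have hFa : arctan (c - 100) = -(π/2) - arctan ((c - 100)⁻¹) := by
    have := arctan_inv_of_neg ha
    linarith
  have hFb : arctan (-c - 100) = -(π/2) - arctan ((-c - 100)⁻¹) := by
    have := arctan_inv_of_neg hb
    linarith
  -- bounds
  have hub : arctan ((c - 100)⁻¹) > -(1/87 : ℝ) := by
    have hx : -((c - 100)⁻¹) < 1/87 := by
      rw [← inv_neg]
      have h87 : (87 : ℝ) < -(c - 100) := by linarith
      have := (inv_lt_inv₀ (by linarith) (by norm_num : (0:ℝ) < 87)).2 h87
      linarith
    have hxpos : 0 < -((c - 100)⁻¹) := by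
      have : (c - 100)⁻¹ < 0 := by simpa using inv_lt_zero.mpr ha
      linarith
    have h1 : arctan (-((c - 100)⁻¹)) < 1/87 :=
      lt_of_le_of_lt (le_of_lt (arctan_lt_self_of_pos hxpos)) hx
    rw [arctan_neg] at h1
    linarith
  have hlb : arctan ((-c - 100)⁻¹) < -(1/226 : ℝ) := by
    have h1 : (1/226 : ℝ) < arctan (1/113) := by
      have htan : tan (1/226 : ℝ) < 1/113 := by
        have hs : sin (1/226 : ℝ) < 1/226 := sin_lt (by norm_num)
        have hcosb : (1/2 : ℝ) < cos (1/226 : ℝ) := by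
          have h3 : cos (1/226 : ℝ) > cos (π/3) := by
            apply cos_lt_cos_of_nonneg_of_le_pi (by norm_num) (by linarith)
            linarith
          rwa [cos_pi_div_three] at h3
        have hcpos : 0 < cos (1/226 : ℝ) := by linarith
        rw [tan_eq_sin_div_cos, div_lt_iff₀ hcpos]
        nlinarith [sin_pos_of_pos_of_lt_pi (x := 1/226) (by norm_num) (by linarith)]
      have := arctan_strictMono htan
      rwa [arctan_tan (by linarith) (by linarith)] at this
    have h2 : arctan (1/113 : ℝ) ≤ arctan (-((-c - 100)⁻¹)) := by
      apply arctan_strictMono.monotone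
      rw [← inv_neg]
      have h113 : -(-c - 100) < 113 := by linarith
      have := (inv_lt_inv₀ (by linarith) (by linarith : (0:ℝ) < -(-c-100))).2 h113
      linarith
    rw [arctan_neg] at h2
    linarith
  -- main inequality
  have hmain : (1 / 20 : ℝ) * (1 / 2 + arctan (c - 100) / π)
      < 1 / 2 + arctan (-c - 100) / π := by
    rw [hFa, hFb]
    have e1 : (1/2 : ℝ) + (-(π/2) - arctan ((c - 100)⁻¹)) / π
        = - arctan ((c - 100)⁻¹) / π := by field_simp; ring
    have e2 : (1/2 : ℝ) + (-(π/2) - arctan ((-c - 100)⁻¹)) / π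
        = - arctan ((-c - 100)⁻¹) / π := by field_simp; ring
    rw [e1, e2]
    have hnum : 1/20 * (-arctan ((c - 100)⁻¹)) < -arctan ((-c - 100)⁻¹) := by linarith
    calc (1:ℝ)/20 * (-arctan ((c - 100)⁻¹) / π)
        = (1/20 * (-arctan ((c - 100)⁻¹))) / π := by ring
      _ < (-arctan ((-c - 100)⁻¹)) / π := by gcongr
      _ = -arctan ((-c - 100)⁻¹) / π := by ring
  exact ⟨hmain, by linarith⟩
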